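/- Let [A] be an interval m×n matrix with midpoint A_c, entrywise-nonnegative radius Δ, and rows [a_i]; let [b] = [b̲, b̄] be an interval vector in ℝ^m. For each i let s_i = sup{‖a‖₂ : a ∈ [a_i]} (which equals the Euclidean norm of the componentwise magnitude vector of [a_i]). Suppose r ≥ 0, x_c ∈ ℝ^n, and y ∈ ℝ^n satisfy y ≥ x_c, y ≥ −x_c (componentwise), and for every i: (A_c x_c)_i + (Δ y)_i + r s_i ≤ b̄_i and −(A_c x_c)_i + (Δ y)_i + r s_i ≤ −b̲_i. Then the Euclidean ball {x ∈ ℝ^n : ‖x − x_c‖₂ ≤ r} is contained in the tolerance solution set Σ_∀∃([A],[b]). -/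
import Mathlib


open Matrix Finset

/-- Sufficient linear-programming condition for an inscribed Euclidean
ball with variable center in the tolerance solution set `Σ_∀∃([A],[b])`, with
`s_i = ‖magnitude of [a_i]‖₂` the supremum of `‖a‖₂` over the row interval. -/
theorem ball_subset_tolerance_of_lp
    {m n : ℕ} (Ac Δ : Matrix (Fin m) (Fin n) ℝ) (hΔ : ∀ i j, 0 ≤ Δ i j)
    (bl bu : Fin m → ℝ)
    (s : Fin m → ℝ)
    (hs : ∀ i, s i = Real.sqrt (∑ j, (max |Ac i j - Δ i j| |Ac i j + Δ i j|) ^ 2))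
    (r : ℝ) (hr : 0 ≤ r) (xc y : Fin n → ℝ)
    (hy1 : ∀ j, xc j ≤ y j) (hy2 : ∀ j, -xc j ≤ y j)
    (h1 : ∀ i, Ac.mulVec xc i + Δ.mulVec y i + r * s i ≤ bu i)
    (h2 : ∀ i, -(Ac.mulVec xc i) + Δ.mulVec y i + r * s i ≤ -(bl i)) :
    {x : Fin n → ℝ | Real.sqrt (∑ j, (x j - xc j) ^ 2) ≤ r} ⊆
      {x | ∀ A : Matrix (Fin m) (Fin n) ℝ,
        (∀ i j, |A i j - Ac i j| ≤ Δ i j) →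
        ∀ i, bl i ≤ A.mulVec x i ∧ A.mulVec x i ≤ bu i} := by
  intro x hx A hA i
  simp only [Set.mem_setOf_eq] at hx
  have hxy : ∀ j, |xc j| ≤ y j := fun j => abs_le.2 ⟨by linarith [hy2 j], hy1 j⟩
  -- entrywise magnitude bound on A
  have hAabs : ∀ j, |A i j| ≤ max |Ac i j - Δ i j| |Ac i j + Δ i j| := by
    intro j
    rcases abs_le.1 (hA i j) with ⟨hl, hu⟩
    rw [abs_le]
    constructor
    · have : -(max |Ac i j - Δ i j| |Ac i j + Δ i j|) ≤ -(|Ac i j - Δ i j|) := by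
        simp [le_max_left]
      have h2' : -(|Ac i j - Δ i j|) ≤ Ac i j - Δ i j := neg_abs_le _
      linarith
    · have : Ac i j + Δ i j ≤ |Ac i j + Δ i j| := le_abs_self _
      have h2' : |Ac i j + Δ i j| ≤ max |Ac i j - Δ i j| |Ac i j + Δ i j| := le_max_right _ _
      linarith
  -- Cauchy-Schwarz bound
  have hCS : |∑ j, A i j * (x j - xc j)| ≤ r * s i := by
    have hsq : (∑ j, A i j * (x j - xc j)) ^ 2
        ≤ (∑ j, (A i j) ^ 2) * ∑ j, (x j - xc j) ^ 2 :=
      Finset.sum_mul_sq_le_sq_mul_sq _ _ _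
    have hA2 : (∑ j, (A i j) ^ 2) ≤ ∑ j, (max |Ac i j - Δ i j| |Ac i j + Δ i j|) ^ 2 := by
      apply Finset.sum_le_sum
      intro j _
      have := hAabs j
      nlinarith [abs_nonneg (A i j), sq_abs (A i j)]
    have hδnn : (0:ℝ) ≤ ∑ j, (x j - xc j) ^ 2 :=
      Finset.sum_nonneg fun j _ => sq_nonneg _
    have hAnn : (0:ℝ) ≤ ∑ j, (A i j) ^ 2 :=
      Finset.sum_nonneg fun j _ => sq_nonneg _
    calc |∑ j, A i j * (x j - xc j)|
        = Real.sqrt ((∑ j, A i j * (x j - xc j)) ^ 2) := (Real.sqrt_sq_eq_abs _).symm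
      _ ≤ Real.sqrt ((∑ j, (A i j) ^ 2) * ∑ j, (x j - xc j) ^ 2) :=
          Real.sqrt_le_sqrt hsq
      _ = Real.sqrt (∑ j, (A i j) ^ 2) * Real.sqrt (∑ j, (x j - xc j) ^ 2) :=
          Real.sqrt_mul hAnn _
      _ ≤ s i * r := by
          apply mul_le_mul _ hx (Real.sqrt_nonneg _) (by rw [hs i]; exact Real.sqrt_nonneg _)
          rw [hs i]
          exact Real.sqrt_le_sqrt hA2
      _ = r * s i := mul_comm _ _
  rcases abs_le.1 hCS with ⟨hCl, hCu⟩
  have hsplit : A.mulVec x i = (∑ j, A i j * xc j) + ∑ j, A i j * (x j - xc j) := by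
    simp only [Matrix.mulVec, dotProduct, ← Finset.sum_add_distrib]
    congr 1; funext j; ring
  have hub_c : ∑ j, A i j * xc j ≤ Ac.mulVec xc i + Δ.mulVec y i := by
    simp only [Matrix.mulVec, dotProduct, ← Finset.sum_add_distrib]
    apply Finset.sum_le_sum
    intro j _
    have h := calc (A i j - Ac i j) * xc j ≤ |(A i j - Ac i j) * xc j| := le_abs_self _
      _ = |A i j - Ac i j| * |xc j| := abs_mul _ _
      _ ≤ Δ i j * y j := mul_le_mul (hA i j) (hxy j) (abs_nonneg _) (hΔ i j)
    linarith
  have hlb_c : Ac.mulVec xc i - Δ.mulVec y i ≤ ∑ j, A i j * xc j := by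
    have : Ac.mulVec xc i - ∑ j, A i j * xc j ≤ Δ.mulVec y i := by
      simp only [Matrix.mulVec, dotProduct, ← Finset.sum_sub_distrib]
      apply Finset.sum_le_sum
      intro j _
      have h := calc (Ac i j - A i j) * xc j ≤ |(Ac i j - A i j) * xc j| := le_abs_self _
        _ = |Ac i j - A i j| * |xc j| := abs_mul _ _
        _ ≤ Δ i j * y j := by
            rw [abs_sub_comm]
            exact mul_le_mul (hA i j) (hxy j) (abs_nonneg _) (hΔ i j)
      linarith
    linarith
  constructor
  · have := h2 i
    rw [hsplit]; linarith
  · have := h1 i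
    rw [hsplit]; linarith
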